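/- Let Δ : M_n(ℂ) → M_{ns}(ℂ) send A to the block diagonal matrix with s copies of A, and let U, U' be ns×ns unitaries. Then Ad_U ∘ Δ = Ad_{U'} ∘ Δ (i.e. U Δ(A) U* = U' Δ(A) U'* for all A) if and only if there exists an s×s unitary V with U' = U · (V ⊗ I_n). -/

import Mathlib

open Matrix Kronecker

private lemma kron_conjT {s n : ℕ} (V : Matrix (Fin s) (Fin s) ℂ) (B : Matrix (Fin n) (Fin n) ℂ) :
    (V ⊗ₖ B)ᴴ = Vᴴ ⊗ₖ Bᴴ := by
  ext ⟨i,p⟩ ⟨j,q⟩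
  simp [conjTranspose_apply, kronecker_apply]

private lemma entry_rel {s n : ℕ} (W : Matrix (Fin s × Fin n) (Fin s × Fin n) ℂ)
    (h : ∀ A : Matrix (Fin n) (Fin n) ℂ,
      W * ((1 : Matrix (Fin s) (Fin s) ℂ) ⊗ₖ A) = ((1 : Matrix (Fin s) (Fin s) ℂ) ⊗ₖ A) * W)
    (a b : Fin n) (i j : Fin s) (p q : Fin n) :
    (if b = q then W (i, p) (j, a) else 0) = if a = p then W (i, b) (j, q) else 0 := by
  have := congrFun (congrFun (h (Matrix.single a b (1:ℂ))) (i,p)) (j,q)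
  simpa [mul_apply, Fintype.sum_prod_type, kronecker_apply, one_apply, Matrix.single_apply,
    Finset.mul_sum, Finset.sum_ite_eq, Finset.sum_ite_eq', ite_and, mul_ite, ite_mul] using this

private lemma comm_struct {s n : ℕ} (hn : 0 < n) (W : Matrix (Fin s × Fin n) (Fin s × Fin n) ℂ)
    (h : ∀ A : Matrix (Fin n) (Fin n) ℂ,
      W * ((1 : Matrix (Fin s) (Fin s) ℂ) ⊗ₖ A) = ((1 : Matrix (Fin s) (Fin s) ℂ) ⊗ₖ A) * W) :
    W = (fun i j => W (i, ⟨0, hn⟩) (j, ⟨0, hn⟩)) ⊗ₖ (1 : Matrix (Fin n) (Fin n) ℂ) := by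
  set z : Fin n := ⟨0, hn⟩
  ext ⟨i,p⟩ ⟨j,q⟩
  show W (i, p) (j, q) = W (i, z) (j, z) * (1 : Matrix (Fin n) (Fin n) ℂ) p q
  rw [one_apply]
  rcases eq_or_ne p q with rfl | hpq
  · have := entry_rel W h p z i j p z
    simpa using this
  · have := entry_rel W h q q i j p q
    simp [hpq] at this ⊢
    simpa [Ne.symm hpq] using this

theorem adjoint_of_amplification_eq_iff (n s : ℕ)
    (U U' : Matrix (Fin s × Fin n) (Fin s × Fin n) ℂ)
    (hU : Uᴴ * U = 1) (hU' : U * Uᴴ = 1)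
    (hU2 : U'ᴴ * U' = 1) (hU2' : U' * U'ᴴ = 1) :
    (∀ A : Matrix (Fin n) (Fin n) ℂ,
        U * ((1 : Matrix (Fin s) (Fin s) ℂ) ⊗ₖ A) * Uᴴ
          = U' * ((1 : Matrix (Fin s) (Fin s) ℂ) ⊗ₖ A) * U'ᴴ)
      ↔ ∃ V : Matrix (Fin s) (Fin s) ℂ,
          Vᴴ * V = 1 ∧ V * Vᴴ = 1 ∧
          U' = U * (V ⊗ₖ (1 : Matrix (Fin n) (Fin n) ℂ)) := by
  constructor
  · intro h
    rcases Nat.eq_zero_or_pos n with rfl | hn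
    · refine ⟨1, by simp, by simp, ?_⟩
      ext ⟨i, p⟩ _
      exact p.elim0
    · set W := Uᴴ * U' with hW
      have hcomm : ∀ A : Matrix (Fin n) (Fin n) ℂ,
          W * ((1 : Matrix (Fin s) (Fin s) ℂ) ⊗ₖ A) = ((1 : Matrix (Fin s) (Fin s) ℂ) ⊗ₖ A) * W := by
        intro A
        have h1 : U * ((1 : Matrix (Fin s) (Fin s) ℂ) ⊗ₖ A) * Uᴴ * U'
            = U' * ((1 : Matrix (Fin s) (Fin s) ℂ) ⊗ₖ A) := by
          rw [h A, mul_assoc, hU2, mul_one]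
        calc W * ((1 : Matrix (Fin s) (Fin s) ℂ) ⊗ₖ A)
            = Uᴴ * (U' * ((1 : Matrix (Fin s) (Fin s) ℂ) ⊗ₖ A)) := by
              rw [hW, mul_assoc]
          _ = Uᴴ * (U * ((1 : Matrix (Fin s) (Fin s) ℂ) ⊗ₖ A) * Uᴴ * U') := by rw [h1]
          _ = (Uᴴ * U) * ((1 : Matrix (Fin s) (Fin s) ℂ) ⊗ₖ A) * (Uᴴ * U') := by
              simp only [mul_assoc]
          _ = ((1 : Matrix (Fin s) (Fin s) ℂ) ⊗ₖ A) * W := by rw [hU, one_mul, hW]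
      set V : Matrix (Fin s) (Fin s) ℂ := fun i j => W (i, ⟨0, hn⟩) (j, ⟨0, hn⟩) with hV
      have hWV : W = V ⊗ₖ (1 : Matrix (Fin n) (Fin n) ℂ) := comm_struct hn W hcomm
      have hWu : Wᴴ * W = 1 := by
        rw [hW, conjTranspose_mul, conjTranspose_conjTranspose, mul_assoc, ← mul_assoc U,
          hU', one_mul, hU2]
      have hWu' : W * Wᴴ = 1 := by
        rw [hW, conjTranspose_mul, conjTranspose_conjTranspose, mul_assoc, ← mul_assoc U',
          hU2', one_mul, hU]
      have key : ∀ X : Matrix (Fin s) (Fin s) ℂ,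
          X ⊗ₖ (1 : Matrix (Fin n) (Fin n) ℂ) = 1 → X = 1 := by
        intro X hX
        ext i j
        have := congrFun (congrFun hX (i, ⟨0, hn⟩)) (j, ⟨0, hn⟩)
        simpa [kronecker_apply, one_apply, Prod.ext_iff] using this
      have hVu : Vᴴ * V = 1 := by
        apply key
        have e : (V ⊗ₖ (1 : Matrix (Fin n) (Fin n) ℂ))ᴴ * (V ⊗ₖ (1 : Matrix (Fin n) (Fin n) ℂ))
            = (Vᴴ * V) ⊗ₖ (1 : Matrix (Fin n) (Fin n) ℂ) := by
          rw [kron_conjT, conjTranspose_one, ← mul_kronecker_mul, one_mul]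
        rw [← e, ← hWV]; exact hWu
      have hVu' : V * Vᴴ = 1 := by
        apply key
        have e : (V ⊗ₖ (1 : Matrix (Fin n) (Fin n) ℂ)) * (V ⊗ₖ (1 : Matrix (Fin n) (Fin n) ℂ))ᴴ
            = (V * Vᴴ) ⊗ₖ (1 : Matrix (Fin n) (Fin n) ℂ) := by
          rw [kron_conjT, conjTranspose_one, ← mul_kronecker_mul, one_mul]
        rw [← e, ← hWV]; exact hWu'
      refine ⟨V, hVu, hVu', ?_⟩
      rw [← hWV, hW, ← mul_assoc, hU', one_mul]
  · rintro ⟨V, hV, hV', rfl⟩ A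
    have key2 : (V ⊗ₖ (1 : Matrix (Fin n) (Fin n) ℂ)) * ((1 : Matrix (Fin s) (Fin s) ℂ) ⊗ₖ A)
        * (V ⊗ₖ (1 : Matrix (Fin n) (Fin n) ℂ))ᴴ = (1 : Matrix (Fin s) (Fin s) ℂ) ⊗ₖ A := by
      rw [kron_conjT, conjTranspose_one, ← mul_kronecker_mul, ← mul_kronecker_mul, mul_one,
        one_mul, mul_one, hV']
    calc U * ((1 : Matrix (Fin s) (Fin s) ℂ) ⊗ₖ A) * Uᴴ
        = U * ((V ⊗ₖ (1 : Matrix (Fin n) (Fin n) ℂ)) * ((1 : Matrix (Fin s) (Fin s) ℂ) ⊗ₖ A)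
            * (V ⊗ₖ (1 : Matrix (Fin n) (Fin n) ℂ))ᴴ) * Uᴴ := by rw [key2]
      _ = U * (V ⊗ₖ (1 : Matrix (Fin n) (Fin n) ℂ)) * ((1 : Matrix (Fin s) (Fin s) ℂ) ⊗ₖ A)
            * (U * (V ⊗ₖ (1 : Matrix (Fin n) (Fin n) ℂ)))ᴴ := by
          rw [conjTranspose_mul]
          simp only [mul_assoc]
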